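/- Fix δ ≥ 0 and integers g. Suppose a Laurent series F(q) = q^{1-g} ∑_{i≥0} e_i q^i (with e_i ∈ ℤ, e_0 arbitrary) can be written as F(q) = ∑_{r=g-δ}^{g} n_r q^{1-r}(1-q)^{2r-2} with rational n_r. Then n_{g-δ} is an explicit ℤ-linear combination of e_0, e_1, …, e_δ with coefficients depending only on g and δ; in particular n_{g-δ} is determined by (is a function of) e_0, …, e_δ alone, independent of e_i for i > δ. -/

import Mathlib

open Finset

noncomputable def q : LaurentSeries ℚ := HahnSeries.single (1 : ℤ) 1

namespace BPSaux

open PowerSeries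

/-- An integer power series representing `(1-q)^m`. -/
noncomputable def F (m : ℤ) : PowerSeries ℤ :=
  if 0 ≤ m then (1 - X) ^ m.toNat else (PowerSeries.mk 1) ^ (-m).toNat

lemma constantCoeff_F (m : ℤ) : constantCoeff (F m) = 1 := by
  have h1 : constantCoeff (PowerSeries.mk 1 : PowerSeries ℤ) = 1 := by
    rw [← coeff_zero_eq_constantCoeff_apply, coeff_mk]; rfl
  unfold F
  split_ifs <;> simp [map_pow, h1]

lemma one_sub_q : ((1 - X : PowerSeries ℚ) : LaurentSeries ℚ) = 1 - q := by
  rw [PowerSeries.coe_sub, PowerSeries.coe_one, PowerSeries.coe_X]; rfl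

lemma mul_one_sub_q : ((PowerSeries.mk 1 : PowerSeries ℚ) : LaurentSeries ℚ) * (1 - q) = 1 := by
  rw [← one_sub_q, ← PowerSeries.coe_mul, mk_one_mul_one_sub_eq_one, PowerSeries.coe_one]

lemma map_F_coe (m : ℤ) :
    ((PowerSeries.map (Int.castRingHom ℚ) (F m) : PowerSeries ℚ) : LaurentSeries ℚ)
      = (1 - q) ^ m := by
  have hmap1 : PowerSeries.map (Int.castRingHom ℚ) (1 - X : PowerSeries ℤ) = 1 - X := by
    rw [map_sub, map_one, PowerSeries.map_X]
  have hmapmk : PowerSeries.map (Int.castRingHom ℚ) (PowerSeries.mk 1 : PowerSeries ℤ)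
      = (PowerSeries.mk 1 : PowerSeries ℚ) := by
    ext n; rw [coeff_map, coeff_mk, coeff_mk]; simp
  unfold F
  split_ifs with h
  · rw [map_pow, hmap1, PowerSeries.coe_pow, one_sub_q, ← zpow_natCast, Int.toNat_of_nonneg h]
  · obtain ⟨k, rfl⟩ : ∃ k : ℕ, m = -(k : ℤ) := ⟨(-m).toNat, by omega⟩
    have hexp : (-(-(k : ℤ))).toNat = k := by omega
    rw [map_pow, hmapmk, PowerSeries.coe_pow, hexp, zpow_neg, zpow_natCast]
    have h1 : ((PowerSeries.mk 1 : PowerSeries ℚ) : LaurentSeries ℚ) ^ k * (1 - q) ^ k = 1 := by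
      rw [← mul_pow, mul_one_sub_q, one_pow]
    exact (inv_eq_of_mul_eq_one_left h1).symm

lemma coeff_one_sub_q_zpow (m z : ℤ) :
    ((1 - q) ^ m).coeff z
      = if z < 0 then 0 else ((PowerSeries.coeff z.natAbs (F m) : ℤ) : ℚ) := by
  rw [← map_F_coe, PowerSeries.coeff_coe]
  split_ifs with h
  · rfl
  · rw [coeff_map]; rfl

end BPSaux

namespace BPSaux2
open BPSaux PowerSeries

noncomputable def A (g : ℤ) (j k : ℕ) : ℤ := PowerSeries.coeff k (F (2 * (g - j) - 2))

lemma A_zero (g : ℤ) (j : ℕ) : A g j 0 = 1 := by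
  rw [A, coeff_zero_eq_constantCoeff_apply, constantCoeff_F]

noncomputable def bb (g : ℤ) (δ : ℕ) : ℕ → ℤ
  | 0 => 1
  | t + 1 => -∑ s ∈ (Finset.range (t + 1)).attach,
      bb g δ s.1 * A g (δ - (t + 1)) (t + 1 - s.1)
  termination_by t => t
  decreasing_by exact Finset.mem_range.mp s.2

lemma sum_c (g : ℤ) (δ : ℕ) (j : ℕ) (hj : j ≤ δ) :
    ∑ i ∈ Finset.range (δ + 1), bb g δ (δ - i) * (if j ≤ i then A g j (i - j) else 0)
      = if j = δ then 1 else 0 := by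
  have hsub : Finset.Icc j δ ⊆ Finset.range (δ + 1) := by
    intro x hx
    simp only [Finset.mem_Icc] at hx
    simp only [Finset.mem_range]; omega
  rw [← Finset.sum_subset hsub (fun x hx hnx => by
    simp only [Finset.mem_Icc] at hnx
    simp only [Finset.mem_range] at hx
    have : ¬ j ≤ x := by omega
    simp [this])]
  rw [Finset.sum_congr rfl (fun x hx => by
    simp only [Finset.mem_Icc] at hx
    rw [if_pos hx.1])]
  rcases eq_or_lt_of_le hj with heq | hlt
  · subst heq
    rw [if_pos rfl]
    rw [show Finset.Icc j j = {j} from Finset.Icc_self j, Finset.sum_singleton,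
      Nat.sub_self, A_zero]
    show bb g j 0 * 1 = 1
    simp only [bb]; ring
  · rw [if_neg (by omega)]
    obtain ⟨t, ht⟩ : ∃ t : ℕ, δ - j = t + 1 := ⟨δ - j - 1, by omega⟩
    have hins : Finset.Icc j δ = insert j (Finset.Icc (j + 1) δ) := by
      ext x; simp only [Finset.mem_Icc, Finset.mem_insert]; omega
    rw [hins, Finset.sum_insert (by simp only [Finset.mem_Icc]; omega)]
    have h1 : bb g δ (δ - j) * A g j (j - j) = bb g δ (t + 1) := by
      rw [Nat.sub_self, A_zero, ht]; ring
    rw [h1]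
    simp only [bb]
    have h2 : ∑ i ∈ Finset.Icc (j + 1) δ, bb g δ (δ - i) * A g j (i - j)
        = ∑ s ∈ (Finset.range (t + 1)).attach,
            bb g δ s.1 * A g (δ - (t + 1)) (t + 1 - s.1) := by
      rw [Finset.sum_attach (Finset.range (t + 1))
        (fun s => bb g δ s * A g (δ - (t + 1)) (t + 1 - s))]
      refine Finset.sum_nbij' (fun i => δ - i) (fun s => δ - s) ?_ ?_ ?_ ?_ ?_
      · intro a ha; simp only [Finset.mem_Icc] at ha; simp only [Finset.mem_range]; omega
      · intro b hb; simp only [Finset.mem_range] at hb; simp only [Finset.mem_Icc]; omega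
      · intro a ha; simp only [Finset.mem_Icc] at ha; omega
      · intro b hb; simp only [Finset.mem_range] at hb; omega
      · intro a ha; simp only [Finset.mem_Icc] at ha
        have e1 : δ - (t + 1) = j := by omega
        have e2 : t + 1 - (δ - a) = a - j := by omega
        rw [e1, e2]
    rw [h2]; ring

end BPSaux2

namespace BPSmain
open BPSaux BPSaux2

lemma coeff_sum {α : Type*} (s : Finset α) (f : α → LaurentSeries ℚ) (z : ℤ) :
    (∑ a ∈ s, f a).coeff z = ∑ a ∈ s, (f a).coeff z :=
  map_sum (HahnSeries.coeff.addMonoidHom z) f s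

lemma hterm (g : ℤ) (n : ℤ → ℚ) (i j : ℕ) :
    (n (g - j) • (q ^ (1 - (g - (j : ℤ))) * (1 - q) ^ (2 * (g - (j : ℤ)) - 2))).coeff
        (1 - g + i)
      = (if j ≤ i then ((A g j (i - j) : ℤ) : ℚ) else 0) * n (g - j) := by
  rw [HahnSeries.coeff_smul]
  have hq : q ^ (1 - (g - (j : ℤ))) = HahnSeries.single (1 - (g - (j : ℤ))) (1 : ℚ) := by
    have hq0 : q = HahnSeries.single (1 : ℤ) (1 : ℚ) := rfl
    rw [hq0, ← RatFunc.single_zpow]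
  rw [hq]
  have hidx : (1 : ℤ) - g + i = ((i : ℤ) - j) + (1 - (g - j)) := by ring
  rw [hidx, HahnSeries.coeff_single_mul_add, one_mul, coeff_one_sub_q_zpow]
  rcases le_or_gt j i with h | h
  · rw [if_neg (by omega : ¬((i : ℤ) - j < 0)), if_pos h, smul_eq_mul, mul_comm]
    congr 2
    rw [A, show ((i : ℤ) - j).natAbs = i - j from by omega]
  · rw [if_pos (by omega : (i : ℤ) - j < 0), if_neg (by omega), smul_zero, zero_mul]

end BPSmain

/-- In an expansion `q^{1-g} ∑_{i≥0} e_i q^i = ∑_{r=g-δ}^{g} n_r q^{1-r}(1-q)^{2r-2}`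
the bottom coefficient `n_{g-δ}` is a `ℤ`-linear combination of `e_0, …, e_δ` with
coefficients depending only on `g` and `δ` — independent of the `e_i` for `i > δ`. -/
theorem bottom_BPS_linear (g : ℤ) (δ : ℕ) :
    ∃ c : ℕ → ℤ, ∀ (e : ℕ → ℤ) (n : ℤ → ℚ),
      (∀ i : ℕ,
        (∑ r ∈ Finset.Icc (g - δ) g,
            n r • (q ^ (1 - r) * (1 - q) ^ (2 * r - 2))).coeff (1 - g + i) = (e i : ℚ)) →
      n (g - δ) = ∑ i ∈ Finset.range (δ + 1), (c i : ℚ) * (e i : ℚ) := by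
  classical
  refine ⟨fun i => BPSaux2.bb g δ (δ - i), ?_⟩
  intro e n hyp
  have hrel : ∀ i : ℕ, (e i : ℚ) =
      ∑ j ∈ Finset.range (δ + 1),
        (if j ≤ i then ((BPSaux2.A g j (i - j) : ℤ) : ℚ) else 0) * n (g - j) := by
    intro i
    rw [← hyp i, BPSmain.coeff_sum]
    refine Finset.sum_nbij' (fun r => (g - r).toNat) (fun j => g - (j : ℤ)) ?_ ?_ ?_ ?_ ?_
    · intro r hr; simp only [Finset.mem_Icc] at hr; simp only [Finset.mem_range]; omega
    · intro j hj; simp only [Finset.mem_range] at hj; simp only [Finset.mem_Icc]; omega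
    · intro r hr; simp only [Finset.mem_Icc] at hr; omega
    · intro j hj; simp only [Finset.mem_range] at hj; omega
    · intro r hr; simp only [Finset.mem_Icc] at hr
      obtain ⟨j, hj, rfl⟩ : ∃ j : ℕ, (j : ℤ) ≤ δ ∧ r = g - (j : ℤ) :=
        ⟨(g - r).toNat, by omega, by omega⟩
      rw [show (g - (g - (j : ℤ))).toNat = j from by omega]
      exact BPSmain.hterm g n i j
  have key : ∀ j ∈ Finset.range (δ + 1),
      (∑ i ∈ Finset.range (δ + 1),
          ((BPSaux2.bb g δ (δ - i) : ℤ) : ℚ) *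
            (if j ≤ i then ((BPSaux2.A g j (i - j) : ℤ) : ℚ) else 0))
        = if j = δ then (1 : ℚ) else 0 := by
    intro j hj
    simp only [Finset.mem_range] at hj
    have hz := BPSaux2.sum_c g δ j (by omega)
    have hcast : ∀ i : ℕ, ((BPSaux2.bb g δ (δ - i) : ℤ) : ℚ) *
        (if j ≤ i then ((BPSaux2.A g j (i - j) : ℤ) : ℚ) else 0)
        = (((BPSaux2.bb g δ (δ - i) * (if j ≤ i then BPSaux2.A g j (i - j) else 0) : ℤ)) : ℚ) := by
      intro i; split_ifs <;> push_cast <;> ring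
    rw [Finset.sum_congr rfl (fun i _ => hcast i), ← Int.cast_sum, hz]
    split_ifs <;> simp
  symm
  calc ∑ i ∈ Finset.range (δ + 1), ((BPSaux2.bb g δ (δ - i) : ℤ) : ℚ) * (e i : ℚ)
      = ∑ i ∈ Finset.range (δ + 1), ∑ j ∈ Finset.range (δ + 1),
          ((BPSaux2.bb g δ (δ - i) : ℤ) : ℚ) *
            ((if j ≤ i then ((BPSaux2.A g j (i - j) : ℤ) : ℚ) else 0) * n (g - j)) := by
        refine Finset.sum_congr rfl fun i _ => ?_
        rw [hrel i, Finset.mul_sum]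
    _ = ∑ j ∈ Finset.range (δ + 1),
          (∑ i ∈ Finset.range (δ + 1),
            ((BPSaux2.bb g δ (δ - i) : ℤ) : ℚ) *
              (if j ≤ i then ((BPSaux2.A g j (i - j) : ℤ) : ℚ) else 0)) * n (g - j) := by
        rw [Finset.sum_comm]
        refine Finset.sum_congr rfl fun j _ => ?_
        rw [Finset.sum_mul]
        exact Finset.sum_congr rfl fun i _ => by ring
    _ = ∑ j ∈ Finset.range (δ + 1), (if j = δ then (1 : ℚ) else 0) * n (g - j) := by
        exact Finset.sum_congr rfl fun j hj => by rw [key j hj]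
    _ = n (g - δ) := by
        rw [Finset.sum_eq_single δ (fun b _ hb => by rw [if_neg hb, zero_mul])
          (fun h => absurd (Finset.self_mem_range_succ δ) h), if_pos rfl, one_mul]
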